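/- In the ARW model with parameters 1/2 < β < 1 and 0 < r < ρ*(β), for every sequence of thresholds t_p ≥ 0 and every natural number m, (log p)^m · √p · Sep(t_p; ε_p, τ_p) → 0 as p → ∞. (Negative part of the Existence of Phases theorem: below the curve r = ρ*(β), even the ideal choice of threshold cannot send the normalized proxy separation to infinity.) -/

import Mathlib

set_option maxHeartbeats 2000000


open Filter Set MeasureTheory

noncomputable def gaussPDF (t : ℝ) : ℝ := (Real.sqrt (2 * Real.pi))⁻¹ * Real.exp (-(t ^ 2) / 2)

/-- standard normal CDF Φ -/
noncomputable def normCDF (t : ℝ) : ℝ := ∫ x in Set.Iic t, gaussPDF x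

/-- survival function of |N(τ,1)| -/
noncomputable def psiBar (τ t : ℝ) : ℝ := (1 - normCDF (t - τ)) + normCDF (-t - τ)

noncomputable def tprFn (ε τ t : ℝ) : ℝ := ε * psiBar τ t

noncomputable def fprFn (ε t : ℝ) : ℝ := (1 - ε) * psiBar 0 t

noncomputable def idrFn (ε τ t : ℝ) : ℝ := ε * normCDF (-t - τ)

/-- clipping proxy separation -/
noncomputable def sepFn (ε τ t : ℝ) : ℝ :=
  2 * τ * (tprFn ε τ t - 2 * idrFn ε τ t) / Real.sqrt (tprFn ε τ t + fprFn ε t)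

/-- proxy false discovery rate -/
noncomputable def fdrFn (ε τ t : ℝ) : ℝ := fprFn ε t / (tprFn ε τ t + fprFn ε t)

/-- magnitude of derivative of TPR -/
noncomputable def tprD (ε τ t : ℝ) : ℝ := ε * (gaussPDF (t - τ) + gaussPDF (t + τ))

/-- magnitude of derivative of FPR -/
noncomputable def fprD (ε t : ℝ) : ℝ := 2 * (1 - ε) * gaussPDF t

/-- proxy local false discovery rate -/
noncomputable def lfdrFn (ε τ t : ℝ) : ℝ := fprD ε t / (tprD ε τ t + fprD ε t)

noncomputable def rhoStar (β : ℝ) : ℝ :=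
  if β ≤ 1 / 2 then 0 else if β ≤ 3 / 4 then β - 1 / 2 else (1 - Real.sqrt (1 - β)) ^ 2

noncomputable def qStar (r β : ℝ) : ℝ := if r ≤ β / 3 then 4 * r else (β + r) ^ 2 / (4 * r)

/-- sparsity ε_p = p^{-β} in the ARW model -/
noncomputable def epsP (β : ℝ) (p : ℕ) : ℝ := (p : ℝ) ^ (-β)

/-- strength τ_p = √(2 r log p) in the ARW model -/
noncomputable def tauP (r : ℝ) (p : ℕ) : ℝ := Real.sqrt (2 * r * Real.log p)

/-- threshold t_p(q) = √(2 q log p) -/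
noncomputable def tP (q : ℝ) (p : ℕ) : ℝ := Real.sqrt (2 * q * Real.log p)

/-- folded two-point mixture G_{ε,τ} -/
noncomputable def gMix (ε τ t : ℝ) : ℝ :=
  (1 - ε) * (normCDF t - normCDF (-t)) + ε * (normCDF (t - τ) - normCDF (-t - τ))

/-- ideal HC objective -/
noncomputable def hcObj (ε τ t : ℝ) : ℝ :=
  ((1 - gMix ε τ t) - psiBar 0 t) / Real.sqrt (gMix ε τ t * (1 - gMix ε τ t))

/-- useful feature discovery exponent δ(q) -/
noncomputable def deltaExp (β r q : ℝ) : ℝ :=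
  if q ≤ r then 1 - β else 1 - β - (Real.sqrt q - Real.sqrt r) ^ 2

/-- separation growth exponent γ(q) -/
noncomputable def gammaExp (β r q : ℝ) : ℝ :=
  deltaExp β r q - max (1 - q) (deltaExp β r q) / 2

open Real

lemma gaussPDF_pos (t : ℝ) : 0 < gaussPDF t := by
  have : 0 < Real.sqrt (2 * Real.pi) := Real.sqrt_pos.2 (by positivity)
  exact mul_pos (inv_pos.2 this) (Real.exp_pos _)

lemma gaussPDF_eq (t : ℝ) : gaussPDF t = (Real.sqrt (2 * Real.pi))⁻¹ * Real.exp (-(1/2) * t ^ 2) := by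
  unfold gaussPDF; ring_nf

lemma integrable_gaussPDF : Integrable gaussPDF := by
  have h := (integrable_exp_neg_mul_sq (by norm_num : (0:ℝ) < 1/2)).const_mul
    (Real.sqrt (2 * Real.pi))⁻¹
  refine h.congr (Eventually.of_forall fun x => ?_)
  rw [gaussPDF_eq]

lemma integral_gaussPDF : ∫ x, gaussPDF x = 1 := by
  simp_rw [gaussPDF_eq]
  rw [MeasureTheory.integral_const_mul, integral_gaussian]
  rw [inv_mul_eq_div, div_eq_one_iff_eq (by positivity)]
  rw [show Real.pi / (1/2) = 2 * Real.pi by ring]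

lemma gaussPDF_mono {x y : ℝ} (hx : 0 ≤ x) (hxy : x ≤ y) : gaussPDF y ≤ gaussPDF x := by
  unfold gaussPDF
  have h : Real.exp (-(y^2)/2) ≤ Real.exp (-(x^2)/2) := Real.exp_le_exp.2 (by nlinarith)
  have : (0:ℝ) ≤ (Real.sqrt (2 * Real.pi))⁻¹ := by positivity
  exact mul_le_mul_of_nonneg_left h this

lemma normCDF_nonneg (t : ℝ) : 0 ≤ normCDF t :=
  setIntegral_nonneg measurableSet_Iic fun x _ => (gaussPDF_pos x).le

lemma normCDF_le_one (t : ℝ) : normCDF t ≤ 1 := by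
  rw [← integral_gaussPDF]
  exact setIntegral_le_integral integrable_gaussPDF (Eventually.of_forall fun x => (gaussPDF_pos x).le)

lemma normCDF_mono {s t : ℝ} (h : s ≤ t) : normCDF s ≤ normCDF t :=
  setIntegral_mono_set integrable_gaussPDF.integrableOn
    (Eventually.of_forall fun x => (gaussPDF_pos x).le)
    (HasSubset.Subset.eventuallyLE (Iic_subset_Iic.2 h))

lemma one_sub_normCDF (t : ℝ) : 1 - normCDF t = ∫ x in Ioi t, gaussPDF x := by
  have := intervalIntegral.integral_Iic_add_Ioi (b := t)
    integrable_gaussPDF.integrableOn integrable_gaussPDF.integrableOn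
  rw [integral_gaussPDF] at this
  unfold normCDF; linarith

lemma normCDF_neg (t : ℝ) : normCDF (-t) = 1 - normCDF t := by
  rw [one_sub_normCDF]
  have : ∀ x : ℝ, gaussPDF (-x) = gaussPDF x := by
    intro x; unfold gaussPDF; rw [neg_pow]; ring_nf
  calc normCDF (-t) = ∫ x in Iic (-t), gaussPDF x := rfl
    _ = ∫ x in Ioi t, gaussPDF (-x) := by rw [← integral_comp_neg_Ioi]
    _ = ∫ x in Ioi t, gaussPDF x := by simp_rw [this]

lemma gaussPDF_mono' {x y : ℝ} (h : x ^ 2 ≤ y ^ 2) : gaussPDF y ≤ gaussPDF x := by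
  unfold gaussPDF
  have h2 : Real.exp (-(y^2)/2) ≤ Real.exp (-(x^2)/2) := Real.exp_le_exp.2 (by nlinarith)
  have : (0:ℝ) ≤ (Real.sqrt (2 * Real.pi))⁻¹ := by positivity
  exact mul_le_mul_of_nonneg_left h2 this

lemma tail_lb (t : ℝ) : gaussPDF (|t| + 1) ≤ ∫ x in Ioi t, gaussPDF x := by
  have h1 : ∫ x in Ioc t (t+1), gaussPDF x ≤ ∫ x in Ioi t, gaussPDF x :=
    setIntegral_mono_set integrable_gaussPDF.integrableOn
      (Eventually.of_forall fun x => (gaussPDF_pos x).le)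
      (HasSubset.Subset.eventuallyLE Ioc_subset_Ioi_self)
  have h2 : gaussPDF (|t| + 1) ≤ ∫ x in Ioc t (t+1), gaussPDF x := by
    have : ∫ x in Ioc t (t+1), gaussPDF (|t| + 1) ≤ ∫ x in Ioc t (t+1), gaussPDF x := by
      refine setIntegral_mono_on (integrableOn_const (by simp) (by simp))
        integrable_gaussPDF.integrableOn measurableSet_Ioc fun x hx => ?_
      refine gaussPDF_mono' ?_
      have hx1 := hx.1; have hx2 := hx.2
      have : |x| ≤ |t| + 1 := by
        rw [abs_le]; constructor
        · nlinarith [neg_abs_le t]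
        · nlinarith [le_abs_self t]
      nlinarith [abs_nonneg x, sq_abs x, sq_abs (|t|+1)]
    calc gaussPDF (|t| + 1) = (volume (Ioc t (t+1))).toReal * gaussPDF (|t| + 1) := by
          rw [Real.volume_Ioc]; norm_num
      _ = ∫ x in Ioc t (t+1), gaussPDF (|t| + 1) := by rw [setIntegral_const]; rfl
      _ ≤ _ := this
  linarith

lemma tail_ub {y : ℝ} (hy : 0 ≤ y) : ∫ x in Ioi y, gaussPDF x ≤ Real.exp (-(y^2)/2) := by
  have key : ∀ x ∈ Ioi y, gaussPDF x ≤ Real.exp (-(y^2)/2) * gaussPDF (x - y) := by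
    intro x hx
    have hx' : y < x := hx
    unfold gaussPDF
    rw [show Real.exp (-(y^2)/2) * ((Real.sqrt (2*Real.pi))⁻¹ * Real.exp (-((x-y)^2)/2))
        = (Real.sqrt (2*Real.pi))⁻¹ * (Real.exp (-(y^2)/2) * Real.exp (-((x-y)^2)/2)) by ring,
      ← Real.exp_add]
    refine mul_le_mul_of_nonneg_left (Real.exp_le_exp.2 (by nlinarith)) (by positivity)
  have hInt : IntegrableOn (fun x => Real.exp (-(y^2)/2) * gaussPDF (x - y)) (Ioi y) :=
    ((integrable_gaussPDF.comp_sub_right y).const_mul _).integrableOn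
  calc ∫ x in Ioi y, gaussPDF x ≤ ∫ x in Ioi y, Real.exp (-(y^2)/2) * gaussPDF (x - y) :=
        setIntegral_mono_on integrable_gaussPDF.integrableOn hInt measurableSet_Ioi key
    _ = Real.exp (-(y^2)/2) * ∫ x in Ioi y, gaussPDF (x - y) := by
        rw [MeasureTheory.integral_const_mul]
    _ ≤ Real.exp (-(y^2)/2) * ∫ x, gaussPDF (x - y) := by
        refine mul_le_mul_of_nonneg_left ?_ (Real.exp_nonneg _)
        exact setIntegral_le_integral (integrable_gaussPDF.comp_sub_right y)
          (Eventually.of_forall fun x => (gaussPDF_pos _).le)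
    _ = Real.exp (-(y^2)/2) := by
        rw [integral_sub_right_eq_self gaussPDF y, integral_gaussPDF, mul_one]

lemma psiBar_pos (τ t : ℝ) : 0 < psiBar τ t := by
  unfold psiBar
  have h1 : gaussPDF (|t - τ| + 1) ≤ 1 - normCDF (t - τ) := by
    rw [one_sub_normCDF]; exact tail_lb _
  have := gaussPDF_pos (|t - τ| + 1)
  have := normCDF_nonneg (-t - τ)
  linarith

lemma psiBar_ub {τ t : ℝ} (hτ : 0 ≤ τ) (ht : 0 ≤ t) :
    psiBar τ t ≤ 2 * Real.exp (-(max (t - τ) 0)^2 / 2) := by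
  unfold psiBar
  rcases le_or_gt τ t with h | h
  · rw [max_eq_left (by linarith)]
    have h1 : 1 - normCDF (t - τ) ≤ Real.exp (-((t - τ)^2)/2) := by
      rw [one_sub_normCDF]; exact tail_ub (by linarith)
    have h2 : normCDF (-t - τ) ≤ Real.exp (-((t + τ)^2)/2) := by
      have : normCDF (-t - τ) = 1 - normCDF (t + τ) := by
        rw [show -t - τ = -(t + τ) by ring, normCDF_neg]
      rw [this, one_sub_normCDF]; exact tail_ub (by linarith)
    have h3 : Real.exp (-((t + τ)^2)/2) ≤ Real.exp (-((t - τ)^2)/2) :=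
      Real.exp_le_exp.2 (by nlinarith)
    linarith
  · rw [max_eq_right (by linarith)]
    have h1 := normCDF_nonneg (t - τ)
    have h2 := normCDF_le_one (-t - τ)
    norm_num
    linarith

lemma psiBar_zero_lb {t : ℝ} (ht : 0 ≤ t) : gaussPDF (t + 1) ≤ psiBar 0 t := by
  unfold psiBar
  have h1 : gaussPDF (|t - 0| + 1) ≤ 1 - normCDF (t - 0) := by
    rw [one_sub_normCDF]; exact tail_lb _
  rw [show |t - 0| = t by rw [sub_zero, abs_of_nonneg ht]] at h1
  have := normCDF_nonneg (-t - 0)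
  linarith


lemma keyC {β r : ℝ} (hβ1 : 1 / 2 < β) (hβ2 : β < 1) (hr1 : 0 < r) (hr2 : r < rhoStar β) :
    ∃ l η : ℝ, 0 ≤ l ∧ l ≤ 1 ∧ 0 < η ∧
      1 - (2 - l) * β + (1 - l) * (2 - l) * r ≤ -η := by
  rw [rhoStar, if_neg (by linarith)] at hr2
  rcases le_or_gt β (3/4) with hβ34 | hβ34
  · rw [if_pos hβ34] at hr2
    exact ⟨0, 2*β - 1 - 2*r, le_refl 0, by norm_num, by linarith, by linarith⟩
  · rw [if_neg (by linarith)] at hr2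
    set s := Real.sqrt (1 - β) with hs
    have hs2 : s^2 = 1 - β := Real.sq_sqrt (by linarith)
    have hs0 : 0 ≤ s := Real.sqrt_nonneg _
    have hs1 : s < 1 := by nlinarith
    set w := Real.sqrt r with hw
    have hw2 : w^2 = r := Real.sq_sqrt hr1.le
    have hw0 : 0 < w := Real.sqrt_pos.2 hr1
    have hws : w < 1 - s := by
      have h1s : (0:ℝ) < 1 - s := by linarith
      have := Real.sqrt_lt_sqrt hr1.le hr2
      rwa [Real.sqrt_sq h1s.le] at this
    have hkey : 4 * r < (β + r)^2 := by nlinarith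
    rcases le_or_gt (3*r) β with h3r | h3r
    · exact ⟨0, 2*β - 1 - 2*r, le_refl 0, by norm_num, by linarith, by linarith⟩
    · refine ⟨(3*r - β)/(2*r), ((β + r)^2 - 4*r)/(4*r), ?_, ?_, ?_, ?_⟩
      · exact div_nonneg (by linarith) (by linarith)
      · rw [div_le_one (by linarith)]
        nlinarith
      · exact div_pos (by linarith) (by linarith)
      · have : 1 - (2 - (3*r - β)/(2*r)) * β + (1 - (3*r - β)/(2*r)) * (2 - (3*r - β)/(2*r)) * r
            = -(((β + r)^2 - 4*r)/(4*r)) := by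
          field_simp
          ring
        rw [this]

lemma quad_ineq {l a u : ℝ} (hl0 : 0 ≤ l) (hl1 : l ≤ 1) (ha : 0 ≤ a) (hu : 0 ≤ u) :
    (1 - l) * (u + 1)^2 ≤ (2 - l) * (max (u - a) 0)^2 + (1 - l) * (2 - l) * (a + 1)^2 := by
  rcases le_or_gt u a with h | h
  · rw [max_eq_right (by linarith)]
    have h1 : (u+1)^2 ≤ (a+1)^2 := by nlinarith
    have h2 : (1-l) * (u+1)^2 ≤ (1-l) * (a+1)^2 := by nlinarith
    have h3 : (1-l) * (a+1)^2 ≤ (1-l) * (2-l) * (a+1)^2 := by nlinarith [mul_nonneg (mul_nonneg (sub_nonneg.2 hl1) (sub_nonneg.2 hl1)) (sq_nonneg (a+1))]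
    nlinarith
  · rw [max_eq_left (by linarith)]
    nlinarith [sq_nonneg ((u+1) - (2 - l) * (a+1))]

lemma sqrt_two_pi_le_three : Real.sqrt (2 * Real.pi) ≤ 3 := by
  rw [show (3:ℝ) = Real.sqrt 9 by rw [show (9:ℝ) = 3^2 by norm_num, Real.sqrt_sq]; norm_num]
  exact Real.sqrt_le_sqrt (by nlinarith [Real.pi_le_four])

lemma sepFn_nonneg {ε τ u : ℝ} (hε : 0 ≤ ε) (hτ : 0 ≤ τ) (hu : 0 ≤ u) : 0 ≤ sepFn ε τ u := by
  unfold sepFn tprFn idrFn psiBar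
  have h1 : normCDF (-u - τ) = 1 - normCDF (u + τ) := by
    rw [show -u - τ = -(u + τ) by ring, normCDF_neg]
  refine div_nonneg ?_ (Real.sqrt_nonneg _)
  have h2 : normCDF (u - τ) ≤ normCDF (u + τ) := normCDF_mono (by linarith)
  have hX : (0:ℝ) ≤ (1 - normCDF (u - τ)) + normCDF (-u - τ) - 2 * normCDF (-u - τ) := by
    rw [h1]; linarith
  have key : 0 ≤ 2 * τ * (ε * ((1 - normCDF (u - τ)) + normCDF (-u - τ)
      - 2 * normCDF (-u - τ))) :=
    mul_nonneg (by linarith) (mul_nonneg hε hX)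
  linarith [key]

lemma sep_sq_le {ε τ u l : ℝ} (hε1 : 0 < ε) (hε2 : ε ≤ 1/2) (hτ : 0 ≤ τ) (hu : 0 ≤ u)
    (hl0 : 0 ≤ l) (hl1 : l ≤ 1) :
    (sepFn ε τ u)^2 ≤ 96 * τ^2 * ε^(2-l) *
      Real.exp (-(2-l) * (max (u - τ) 0)^2/2 + (1-l) * (u+1)^2/2) := by
  set A := tprFn ε τ u with hA_def
  set W := psiBar 0 u with hW_def
  set D := tprFn ε τ u + fprFn ε u with hD_def
  have hΨ := psiBar_pos τ u
  have hA : 0 < A := mul_pos hε1 hΨ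
  have hWlb : gaussPDF (u + 1) ≤ W := psiBar_zero_lb hu
  have hW : 0 < W := lt_of_lt_of_le (gaussPDF_pos _) hWlb
  have hFpr : W/2 ≤ fprFn ε u := by
    unfold fprFn; rw [← hW_def]; nlinarith
  have hDW : W/2 ≤ D := by
    have : 0 ≤ A := hA.le
    rw [hD_def, ← hA_def]; linarith
  have hD : 0 < D := lt_of_lt_of_le (by linarith) hDW
  have hDA : A ≤ D := by
    rw [hD_def, ← hA_def]; linarith
  -- numerator
  set N := tprFn ε τ u - 2 * idrFn ε τ u with hN_def
  have hN0 : 0 ≤ N := by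
    rw [hN_def]; unfold tprFn idrFn psiBar
    have h1 : normCDF (-u - τ) = 1 - normCDF (u + τ) := by
      rw [show -u - τ = -(u + τ) by ring, normCDF_neg]
    have h2 : normCDF (u - τ) ≤ normCDF (u + τ) := normCDF_mono (by linarith)
    nlinarith [h1, h2]
  have hNA : N ≤ A := by
    rw [hN_def, ← hA_def]
    have : 0 ≤ idrFn ε τ u := mul_nonneg hε1.le (normCDF_nonneg _)
    linarith
  -- sep^2 = 4 τ^2 N^2 / D
  have hsep : (sepFn ε τ u)^2 = 4 * τ^2 * N^2 / D := by
    unfold sepFn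
    rw [← hN_def, ← hD_def, div_pow, Real.sq_sqrt hD.le]
    ring_nf
  -- core: N^2/D ≤ A^(2-l) * (W/2)^(l-1)
  have hcore : N^2 / D ≤ A^(2-l) * (W/2)^(l-1) := by
    have h1 : N^2 ≤ A^2 := by nlinarith
    have h2 : (A:ℝ)^(2:ℝ) = A^(2-l) * A^l := by
      rw [← Real.rpow_add hA]; norm_num
    have h3 : A^l ≤ D^l := Real.rpow_le_rpow hA.le hDA hl0
    have h4 : N^2/D ≤ A^(2-l) * D^(l-1) := by
      have hA2 : A^2 = A^(2-l) * A^l := by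
        rw [← h2, Real.rpow_two]
      have hDl : D^(l-1) = D^l / D := by
        rw [Real.rpow_sub hD, Real.rpow_one]
      have hle : N^2 ≤ A^(2-l) * D^l := by
        calc N^2 ≤ A^2 := h1
          _ = A^(2-l) * A^l := hA2
          _ ≤ A^(2-l) * D^l :=
            mul_le_mul_of_nonneg_left h3 (Real.rpow_pos_of_pos hA _).le
      calc N^2/D ≤ (A^(2-l) * D^l)/D := (div_le_div_iff_of_pos_right hD).2 hle
        _ = A^(2-l) * D^(l-1) := by rw [hDl]; ring
    have h5 : D^(l-1) ≤ (W/2)^(l-1) :=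
      Real.rpow_le_rpow_of_nonpos (by linarith) hDW (by linarith)
    calc N^2/D ≤ A^(2-l) * D^(l-1) := h4
      _ ≤ A^(2-l) * (W/2)^(l-1) := by
          have : 0 ≤ A^(2-l) := (Real.rpow_pos_of_pos hA _).le
          nlinarith
  -- bound A^(2-l)
  set v := max (u - τ) 0 with hv_def
  have hAub : A ≤ ε * (2 * Real.exp (-(v^2)/2)) := by
    rw [hA_def]; unfold tprFn
    have := psiBar_ub hτ hu
    nlinarith
  have hA1 : A^(2-l) ≤ 4 * ε^(2-l) * Real.exp (-(2-l) * v^2/2) := by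
    have step1 : A^(2-l) ≤ (ε * (2 * Real.exp (-(v^2)/2)))^(2-l) :=
      Real.rpow_le_rpow hA.le hAub (by linarith)
    have step2 : (ε * (2 * Real.exp (-(v^2)/2)))^(2-l)
        = ε^(2-l) * ((2:ℝ)^(2-l) * Real.exp (-(v^2)/2 * (2-l))) := by
      rw [Real.mul_rpow hε1.le (by positivity), Real.mul_rpow (by norm_num) (Real.exp_nonneg _),
        ← Real.exp_mul]
    have step3 : (2:ℝ)^(2-l) ≤ 4 := by
      calc (2:ℝ)^(2-l) ≤ (2:ℝ)^(2:ℝ) := Real.rpow_le_rpow_of_exponent_le (by norm_num) (by linarith)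
        _ = 4 := by rw [show (2:ℝ) = ((2:ℕ):ℝ) by norm_num, Real.rpow_natCast]; norm_num
    calc A^(2-l) ≤ ε^(2-l) * ((2:ℝ)^(2-l) * Real.exp (-(v^2)/2 * (2-l))) := by
          rw [← step2]; exact step1
      _ ≤ ε^(2-l) * (4 * Real.exp (-(v^2)/2 * (2-l))) := by
          have h0 : 0 ≤ ε^(2-l) := (Real.rpow_pos_of_pos hε1 _).le
          have he : 0 ≤ Real.exp (-(v^2)/2 * (2-l)) := Real.exp_nonneg _
          exact mul_le_mul_of_nonneg_left (mul_le_mul_of_nonneg_right step3 he) h0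
      _ = 4 * ε^(2-l) * Real.exp (-(2-l) * v^2/2) := by rw [show -(v^2)/2 * (2-l) = -(2-l)*v^2/2 by ring]; ring
  -- bound (W/2)^(l-1)
  have hW1 : (W/2)^(l-1) ≤ 6 * Real.exp ((1-l) * (u+1)^2/2) := by
    have hglb : (0:ℝ) < gaussPDF (u+1) / 2 := half_pos (gaussPDF_pos (u+1))
    have step1 : (W/2)^(l-1) ≤ (gaussPDF (u+1)/2)^(l-1) :=
      Real.rpow_le_rpow_of_nonpos hglb (by linarith) (by linarith)
    have hgeq : gaussPDF (u+1)/2 = ((2 * Real.sqrt (2*Real.pi))⁻¹) * Real.exp (-((u+1)^2)/2) := by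
      unfold gaussPDF; field_simp
    have hc : (0:ℝ) < (2 * Real.sqrt (2*Real.pi))⁻¹ := by positivity
    have step2 : (gaussPDF (u+1)/2)^(l-1)
        = ((2 * Real.sqrt (2*Real.pi))⁻¹)^(l-1) * Real.exp (-((u+1)^2)/2 * (l-1)) := by
      rw [hgeq, Real.mul_rpow hc.le (Real.exp_nonneg _), ← Real.exp_mul]
    have step3 : ((2 * Real.sqrt (2*Real.pi))⁻¹)^(l-1) ≤ 6 := by
      have hbase : (1:ℝ) ≤ 2 * Real.sqrt (2*Real.pi) := by
        nlinarith [Real.sqrt_nonneg (2*Real.pi), Real.sq_sqrt (by positivity : (0:ℝ) ≤ 2*Real.pi),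
          Real.pi_gt_three]
      have heq : ((2 * Real.sqrt (2*Real.pi))⁻¹)^(l-1) = (2 * Real.sqrt (2*Real.pi))^(1-l) := by
        rw [Real.inv_rpow (by positivity : (0:ℝ) ≤ 2 * Real.sqrt (2*Real.pi)),
          ← Real.rpow_neg (by positivity : (0:ℝ) ≤ 2 * Real.sqrt (2*Real.pi)),
          show -(l-1) = 1-l by ring]
      rw [heq]
      calc (2 * Real.sqrt (2*Real.pi))^(1-l) ≤ (2 * Real.sqrt (2*Real.pi))^(1:ℝ) :=
            Real.rpow_le_rpow_of_exponent_le hbase (by linarith)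
        _ = 2 * Real.sqrt (2*Real.pi) := Real.rpow_one _
        _ ≤ 6 := by nlinarith [sqrt_two_pi_le_three]
    calc (W/2)^(l-1) ≤ ((2 * Real.sqrt (2*Real.pi))⁻¹)^(l-1) * Real.exp (-((u+1)^2)/2 * (l-1)) := by
          rw [← step2]; exact step1
      _ ≤ 6 * Real.exp ((1-l) * (u+1)^2/2) := by
          rw [show -((u+1)^2)/2 * (l-1) = (1-l) * (u+1)^2/2 by ring]
          have := Real.exp_nonneg ((1-l) * (u+1)^2/2)
          nlinarith
  -- combine
  have hfinal : N^2/D ≤ 24 * ε^(2-l) * Real.exp (-(2-l) * v^2/2 + (1-l) * (u+1)^2/2) := by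
    calc N^2/D ≤ A^(2-l) * (W/2)^(l-1) := hcore
      _ ≤ (4 * ε^(2-l) * Real.exp (-(2-l) * v^2/2)) * (6 * Real.exp ((1-l) * (u+1)^2/2)) := by
          have h0 : 0 ≤ A^(2-l) := (Real.rpow_pos_of_pos hA _).le
          have h0' : 0 ≤ (W/2)^(l-1) := (Real.rpow_pos_of_pos (by linarith) _).le
          have hx : 0 ≤ 4 * ε^(2-l) * Real.exp (-(2-l) * v^2/2) := by positivity
          exact mul_le_mul hA1 hW1 h0' (by positivity)
      _ = 24 * ε^(2-l) * Real.exp (-(2-l) * v^2/2 + (1-l) * (u+1)^2/2) := by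
          rw [Real.exp_add]; ring
  rw [hsep]
  rw [div_eq_mul_inv, mul_assoc]
  calc 4 * τ^2 * (N^2 * D⁻¹) ≤ 4 * τ^2 * (24 * ε^(2-l) * Real.exp (-(2-l) * v^2/2 + (1-l) * (u+1)^2/2)) := by
        have : N^2 * D⁻¹ = N^2/D := by ring
        rw [this]
        have h4 : 0 ≤ 4 * τ^2 := by positivity
        nlinarith [sq_nonneg τ]
    _ = 96 * τ^2 * ε^(2-l) * Real.exp (-(2-l) * v^2/2 + (1-l) * (u+1)^2/2) := by ring


/-- Negative part of Existence of Phases: below r = ρ*(β) no sequence of thresholds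
can make the normalized proxy separation tend to infinity; indeed it tends to 0
even after multiplying by any power of log p. -/
theorem stmt1 (β r : ℝ) (hβ1 : 1 / 2 < β) (hβ2 : β < 1)
    (hr1 : 0 < r) (hr2 : r < rhoStar β)
    (t : ℕ → ℝ) (ht : ∀ p, 0 ≤ t p) (m : ℕ) :
    Filter.Tendsto
      (fun p : ℕ =>
        (Real.log p) ^ m * (Real.sqrt p * sepFn (epsP β p) (tauP r p) (t p)))
      Filter.atTop (nhds 0) := by
  obtain ⟨l, η, hl0, hl1, hη, hC⟩ := keyC hβ1 hβ2 hr1 hr2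
  have hr2' : r < 1 := by
    have : rhoStar β ≤ 1 := by
      unfold rhoStar
      split_ifs with h1 h2
      · norm_num
      · linarith
      · nlinarith [Real.sqrt_nonneg (1 - β), Real.sq_sqrt (show (0:ℝ) ≤ 1-β by linarith)]
    linarith
  set K' : ℝ := 192 * Real.exp (8/η + 1) with hK'
  set k : ℕ := 2*m+1 with hk
  set g : ℝ → ℝ := fun L => Real.sqrt (K' * L^k * Real.exp (-(η/2)*L)) with hg_def
  -- the dominating sequence tends to zero
  have h0 : Tendsto (fun L : ℝ => K' * L^k * Real.exp (-(η/2)*L)) atTop (nhds 0) := by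
    have base := tendsto_pow_mul_exp_neg_atTop_nhds_zero k
    have hhalf : (0:ℝ) < η/2 := half_pos hη
    have hmul : Tendsto (fun L : ℝ => (η/2) * L) atTop atTop :=
      Tendsto.const_mul_atTop hhalf tendsto_id
    have comp := base.comp hmul
    have comp2 := comp.const_mul (K' * (2/η)^k)
    rw [mul_zero] at comp2
    refine comp2.congr fun L => ?_
    simp only [Function.comp]
    rw [mul_pow]
    have : (2/η)^k * ((η/2)^k * L^k) = L^k := by
      rw [← mul_assoc, ← mul_pow, div_mul_div_comm]
      rw [show 2 * η / (η * 2) = 1 by rw [mul_comm η 2]; exact div_self (by positivity)]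
      simp
    calc K' * (2/η)^k * (((η/2))^k * L^k * rexp (-((η/2) * L)))
        = K' * ((2/η)^k * ((η/2)^k * L^k)) * rexp (-(η/2) * L) := by ring_nf
      _ = K' * L^k * rexp (-(η/2)*L) := by rw [this]
  have hg0 : Tendsto g atTop (nhds 0) := by
    have := h0.sqrt
    rwa [Real.sqrt_zero] at this
  have hlog : Tendsto (fun p : ℕ => Real.log p) atTop atTop :=
    Real.tendsto_log_atTop.comp tendsto_natCast_atTop_atTop
  have hG : Tendsto (fun p : ℕ => g (Real.log p)) atTop (nhds 0) := hg0.comp hlog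
  refine squeeze_zero' ?_ ?_ hG
  · filter_upwards [eventually_ge_atTop 1] with p hp
    have hp0 : (0:ℝ) < p := by exact_mod_cast hp
    have hL0 : 0 ≤ Real.log p := Real.log_nonneg (by exact_mod_cast hp)
    have hε0 : 0 ≤ epsP β p := (Real.rpow_pos_of_pos hp0 _).le
    have hτ0 : 0 ≤ tauP r p := Real.sqrt_nonneg _
    exact mul_nonneg (pow_nonneg hL0 m)
      (mul_nonneg (Real.sqrt_nonneg _) (sepFn_nonneg hε0 hτ0 (ht p)))
  · filter_upwards [eventually_ge_atTop 4] with p hp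
    set L := Real.log p with hL_def
    set u := t p with hu_def
    set τ := tauP r p with hτ_def
    set ε := epsP β p with hε_def
    have hp1 : (1:ℝ) ≤ (p:ℝ) := by
      have : (4:ℝ) ≤ (p:ℝ) := by exact_mod_cast hp
      linarith
    have hp4 : (4:ℝ) ≤ (p:ℝ) := by exact_mod_cast hp
    have hp0 : (0:ℝ) < p := by linarith
    have hL0 : 0 ≤ L := Real.log_nonneg hp1
    have hε1 : 0 < ε := Real.rpow_pos_of_pos hp0 _
    have hε2 : ε ≤ 1/2 := by
      have h1 : (p:ℝ)^(-β) ≤ (p:ℝ)^(-(1/2):ℝ) :=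
        Real.rpow_le_rpow_of_exponent_le hp1 (by linarith)
      have h2 : (p:ℝ)^(-(1/2):ℝ) ≤ (4:ℝ)^(-(1/2):ℝ) :=
        Real.rpow_le_rpow_of_nonpos (by norm_num) hp4 (by norm_num)
      have h3 : (4:ℝ)^(-(1/2):ℝ) = 1/2 := by
        rw [Real.rpow_neg (by norm_num), show (4:ℝ) = 2^(2:ℕ) by norm_num,
          ← Real.rpow_natCast (2:ℝ) 2, ← Real.rpow_mul (by norm_num)]
        norm_num
      calc ε = (p:ℝ)^(-β) := hε_def
        _ ≤ (4:ℝ)^(-(1/2):ℝ) := le_trans h1 h2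
        _ = 1/2 := h3
    have hτ0 : 0 ≤ τ := Real.sqrt_nonneg _
    have hτ2 : τ^2 = 2*r*L := Real.sq_sqrt (by positivity)
    have hu0 : 0 ≤ u := ht p
    set v := max (u - τ) 0 with hv_def
    -- sep bound
    have hsep := sep_sq_le (ε := ε) (τ := τ) (u := u) (l := l) hε1 hε2 hτ0 hu0 hl0 hl1
    -- F and its square
    set F : ℝ := L^m * (Real.sqrt p * sepFn ε τ u) with hF_def
    have hF0 : 0 ≤ F :=
      mul_nonneg (pow_nonneg hL0 m)
        (mul_nonneg (Real.sqrt_nonneg _) (sepFn_nonneg hε1.le hτ0 hu0))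
    have hFsq : F^2 = L^(2*m) * ((p:ℝ) * (sepFn ε τ u)^2) := by
      rw [hF_def]
      rw [mul_pow, mul_pow, Real.sq_sqrt hp0.le, ← pow_mul]
      ring_nf
    -- exponent computations
    have hεpow : ε^(2-l) = Real.exp ((L * -β) * (2-l)) := by
      rw [hε_def]
      unfold epsP
      rw [← Real.exp_log hp0, ← Real.exp_mul, ← Real.exp_mul, hL_def]
    have hpL : (p:ℝ) = Real.exp L := (Real.exp_log hp0).symm
    -- total exponent bound
    set X : ℝ := L + (L * -β) * (2-l) + (-(2-l) * v^2/2 + (1-l) * (u+1)^2/2) with hX_def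
    have hXle : X ≤ -(η/2)*L + (8/η + 1) := by
      have hq := quad_ineq hl0 hl1 hτ0 hu0 (a := τ) (u := u)
      have hEb : -(2-l) * v^2/2 + (1-l) * (u+1)^2/2 ≤ (1-l)*(2-l)*(τ+1)^2/2 := by
        rw [hv_def]; linarith
      have hstep : (1-l)*(2-l)*(τ+1)^2/2 ≤ (1-l)*(2-l)*r*L + (2*τ+1) := by
        have hexp : (τ+1)^2 = 2*r*L + 2*τ + 1 := by rw [add_sq, hτ2]; ring
        have hll : (1-l)*(2-l) ≤ 2 := by
          nlinarith only [mul_nonneg hl0 (sub_nonneg.2 hl1)]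
        have hbig : 0 ≤ (2 - (1-l)*(2-l)) * (2*τ+1) :=
          mul_nonneg (by linarith only [hll]) (by linarith only [hτ0])
        rw [hexp]
        nlinarith only [hbig]
      have hlin : L + (L * -β) * (2-l) + (1-l)*(2-l)*r*L ≤ -η*L := by
        have hCL := mul_le_mul_of_nonneg_left hC hL0
        nlinarith only [hCL]
      have hτub : 2*τ ≤ (η/4)*L + 8/η := by
        have h2τ : τ ≤ Real.sqrt (2*L) := by
          rw [hτ_def]
          exact Real.sqrt_le_sqrt (by nlinarith only [hr1, hr2', hL0])
        have hs := Real.sq_sqrt (show (0:ℝ) ≤ 2*L by linarith only [hL0])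
        have key : 2*η*τ ≤ η^2*L/4 + 8 := by
          nlinarith only [sq_nonneg (η * Real.sqrt (2*L)/2 - 4), hs,
            mul_le_mul_of_nonneg_left h2τ hη.le]
        have heq : (η/4)*L + 8/η - 2*τ = (η^2*L/4 + 8 - 2*η*τ)/η := by
          field_simp
        have hnn : 0 ≤ (η^2*L/4 + 8 - 2*η*τ)/η :=
          div_nonneg (by linarith only [key]) hη.le
        linarith only [heq, hnn]
      rw [hX_def]
      have hlast : -η*L + (2*τ + 1) ≤ -(η/2)*L + (8/η + 1) := by
        linarith only [mul_nonneg hη.le hL0, hτub]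
      linarith only [hEb, hstep, hlin, hlast]
    -- final bound on F^2
    have hF2 : F^2 ≤ K' * L^k * Real.exp (-(η/2)*L) := by
      have step1 : (p:ℝ) * (sepFn ε τ u)^2
          ≤ (96 * τ^2) * ((p:ℝ) * (ε^(2-l) * Real.exp (-(2-l) * v^2/2 + (1-l) * (u+1)^2/2))) := by
        have h := mul_le_mul_of_nonneg_left hsep hp0.le
        rw [hv_def]
        calc (p:ℝ) * (sepFn ε τ u)^2
            ≤ (p:ℝ) * (96 * τ^2 * ε^(2-l) *
              Real.exp (-(2-l) * (max (u - τ) 0)^2/2 + (1-l) * (u+1)^2/2)) := h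
          _ = (96 * τ^2) * ((p:ℝ) * (ε^(2-l) *
              Real.exp (-(2-l) * (max (u - τ) 0)^2/2 + (1-l) * (u+1)^2/2))) := by ring
      have step2 : (p:ℝ) * (ε^(2-l) * Real.exp (-(2-l) * v^2/2 + (1-l) * (u+1)^2/2))
          = Real.exp X := by
        rw [hpL, hεpow, ← Real.exp_add, ← Real.exp_add, hX_def]
        exact congrArg Real.exp (by ring)
      have step3 : Real.exp X ≤ Real.exp (8/η + 1) * Real.exp (-(η/2)*L) := by
        rw [← Real.exp_add]
        exact Real.exp_le_exp.2 (by linarith)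
      have hτ2le : 96 * τ^2 ≤ 192 * L := by rw [hτ2]; nlinarith
      have hLk : L^(2*m) * L = L^k := by rw [hk, pow_succ]
      calc F^2 = L^(2*m) * ((p:ℝ) * (sepFn ε τ u)^2) := hFsq
        _ ≤ L^(2*m) * ((96 * τ^2) * Real.exp X) := by
            have := step1
            rw [step2] at this
            exact mul_le_mul_of_nonneg_left this (pow_nonneg hL0 _)
        _ ≤ L^(2*m) * ((192 * L) * (Real.exp (8/η + 1) * Real.exp (-(η/2)*L))) := by
            refine mul_le_mul_of_nonneg_left ?_ (pow_nonneg hL0 _)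
            exact mul_le_mul hτ2le step3 (Real.exp_nonneg _) (by linarith)
        _ = K' * L^k * Real.exp (-(η/2)*L) := by
            rw [hK', ← hLk]; ring
    -- conclude F ≤ g L
    have : F = Real.sqrt (F^2) := (Real.sqrt_sq hF0).symm
    rw [hF_def] at this
    calc L^m * (Real.sqrt p * sepFn ε τ u) = Real.sqrt ((L^m * (Real.sqrt p * sepFn ε τ u))^2) := this
      _ ≤ g L := by
          rw [hg_def]
          exact Real.sqrt_le_sqrt (by rw [← hF_def]; exact hF2)
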